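/- Invariant polynomials give Lie algebra cocycles: with g, h, pr, and curvature R as above, for any h-invariant symmetric polynomial P ∈ Sym^m(h^∨)^h, the cochain P(R) ∈ C^{2m}(g, h; ℝ) defined by composing Λ^m R with P is closed under the Chevalley-Eilenberg differential: ∂_Lie P(R) = 0. -/

import Mathlib

/-!
STATEMENT 16: Invariant polynomials give relative Lie algebra cocycles (Chern-Weil).
With g a Lie algebra, h ⊆ g a subalgebra with h-equivariant projection pr : g → h,
and curvature R(α,β) = [pr α, pr β] − pr[α,β], for any h-invariant symmetric
m-multilinear polynomial P on h, the Chern-Weil cochain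
  P(R)(a_1 ∧ ⋯ ∧ a_{2m}) = Σ_{σ ∈ S_{2m}} sgn(σ) P(R(a_{σ(1)},a_{σ(2)}), …,
                                               R(a_{σ(2m−1)},a_{σ(2m)}))
(the alternating sum over pairings; the overall normalization 1/(2^m m!) is
irrelevant for closedness) is closed for the Chevalley-Eilenberg differential:
∂_Lie P(R) = 0.  Since the coefficients ℝ carry the trivial g-action, ∂_Lie reduces
to the bracket-insertion sum.
-/

open Finset

noncomputable section

variable {g : Type*} [LieRing g] [LieAlgebra ℝ g]

/-- Remove the indices i < j from the tuple v and prepend the bracket ⁅v i, v j⁆. -/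
def pairTuple {n : ℕ} (v : Fin (n + 1) → g) (i j : Fin (n + 1)) : Fin n → g :=
  fun l =>
    if (l : ℕ) = 0 then ⁅v i, v j⁆
    else
      v ⟨(let m := (l : ℕ) - 1
          let p1 := if m < (i : ℕ) then m else m + 1
          if p1 < (j : ℕ) then p1 else p1 + 1) % (n + 1),
        Nat.mod_lt _ (Nat.succ_pos n)⟩

/-- The Chevalley-Eilenberg differential with trivial (ℝ) coefficients,
as a raw formula on n-cochains. -/
def ceDiffTriv (n : ℕ) (c : (Fin n → g) → ℝ) : (Fin (n + 1) → g) → ℝ :=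
  fun v =>
    ∑ i : Fin (n + 1), ∑ j : Fin (n + 1),
      if (i : ℕ) < (j : ℕ) then
        ((-1 : ℤ) ^ ((i : ℕ) + (j : ℕ))) • c (pairTuple v i j)
      else 0

namespace ChernWeilAux

open Equiv Equiv.Perm

/-- The curvature of the projection `pr`. -/
def Rc (h : LieSubalgebra ℝ g) (pr : g →ₗ[ℝ] h) (x y : g) : h :=
  ⁅pr x, pr y⁆ - pr ⁅x, y⁆

variable (h : LieSubalgebra ℝ g) (pr : g →ₗ[ℝ] h)

lemma Rc_skew (x y : g) : Rc h pr x y = - Rc h pr y x := by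
  simp only [Rc]
  rw [← lie_skew (pr y) (pr x), ← lie_skew x y, map_neg]
  abel

lemma Rc_neg_left (x y : g) : Rc h pr (-x) y = - Rc h pr x y := by
  simp only [Rc, map_neg, neg_lie, lie_neg]
  abel

lemma Rc_neg_right (x y : g) : Rc h pr x (-y) = - Rc h pr x y := by
  simp only [Rc, map_neg, neg_lie, lie_neg]
  abel

lemma bianchi (x y z : g) :
    Rc h pr ⁅x, y⁆ z + Rc h pr ⁅y, z⁆ x + Rc h pr ⁅z, x⁆ y
      = ⁅pr x, Rc h pr y z⁆ + ⁅pr y, Rc h pr z x⁆ + ⁅pr z, Rc h pr x y⁆ := by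
  have hjac : ⁅⁅x, y⁆, z⁆ + ⁅⁅y, z⁆, x⁆ + ⁅⁅z, x⁆, y⁆ = (0 : g) := by
    have hj := lie_jacobi x y z
    have e : ⁅⁅x, y⁆, z⁆ + ⁅⁅y, z⁆, x⁆ + ⁅⁅z, x⁆, y⁆
        = -((⁅x, ⁅y, z⁆⁆ + ⁅y, ⁅z, x⁆⁆) + ⁅z, ⁅x, y⁆⁆) := by
      rw [show ⁅⁅x, y⁆, z⁆ = -⁅z, ⁅x, y⁆⁆ from (lie_skew _ _).symm,
        show ⁅⁅y, z⁆, x⁆ = -⁅x, ⁅y, z⁆⁆ from (lie_skew _ _).symm,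
        show ⁅⁅z, x⁆, y⁆ = -⁅y, ⁅z, x⁆⁆ from (lie_skew _ _).symm]
      abel
    rw [e, show (⁅x, ⁅y, z⁆⁆ + ⁅y, ⁅z, x⁆⁆) + ⁅z, ⁅x, y⁆⁆ = (0:g) from hj, neg_zero]
  have hg : pr ⁅⁅x, y⁆, z⁆ + pr ⁅⁅y, z⁆, x⁆ + pr ⁅⁅z, x⁆, y⁆ = 0 := by
    rw [← map_add, ← map_add, hjac, map_zero]
  have hh := lie_jacobi (pr x) (pr y) (pr z)
  have s1 : ⁅pr x, pr ⁅y, z⁆⁆ = -⁅pr ⁅y, z⁆, pr x⁆ := (lie_skew _ _).symm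
  have s2 : ⁅pr y, pr ⁅z, x⁆⁆ = -⁅pr ⁅z, x⁆, pr y⁆ := (lie_skew _ _).symm
  have s3 : ⁅pr z, pr ⁅x, y⁆⁆ = -⁅pr ⁅x, y⁆, pr z⁆ := (lie_skew _ _).symm
  simp only [Rc, lie_sub]
  rw [s1, s2, s3]
  have hh' : ⁅pr x, ⁅pr y, pr z⁆⁆ = -(⁅pr y, ⁅pr z, pr x⁆⁆ + ⁅pr z, ⁅pr x, pr y⁆⁆) := by
    have := lie_jacobi (pr x) (pr y) (pr z)
    linear_combination (norm := abel) this
  have hg' : pr ⁅⁅x, y⁆, z⁆ = -(pr ⁅⁅y, z⁆, x⁆ + pr ⁅⁅z, x⁆, y⁆) := by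
    linear_combination (norm := abel) hg
  rw [hh', hg']
  abel

/-- Value of `succAbove` as a natural number. -/
lemma succAbove_val {K : ℕ} (a : Fin (K + 1)) (t : Fin K) :
    ((a.succAbove t : Fin (K + 1)) : ℕ) = if (t : ℕ) < (a : ℕ) then (t : ℕ) else (t : ℕ) + 1 := by
  by_cases hlt : (t : ℕ) < (a : ℕ)
  · rw [Fin.succAbove_of_castSucc_lt _ _ (by simpa [Fin.lt_def] using hlt)]
    simp [hlt]
  · rw [Fin.succAbove_of_le_castSucc _ _ (by simp only [Fin.le_def, Fin.coe_castSucc]; omega)]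
    simp [hlt]

/-- The embedding of permutations fixing `0`. -/
def iot {K : ℕ} (σ : Perm (Fin K)) : Perm (Fin (K + 1)) :=
  Equiv.Perm.decomposeFin.symm (0, σ)

@[simp] lemma iot_zero {K : ℕ} (σ : Perm (Fin K)) : iot σ 0 = 0 := by
  simp [iot]

@[simp] lemma iot_succ {K : ℕ} (σ : Perm (Fin K)) (k : Fin K) :
    iot σ k.succ = (σ k).succ := by
  simp [iot]

@[simp] lemma sign_iot {K : ℕ} (σ : Perm (Fin K)) : sign (iot σ) = sign σ := by
  simp [iot]

lemma iot_mul {K : ℕ} (a b : Perm (Fin K)) : iot (a * b) = iot a * iot b := by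
  ext x
  refine Fin.cases ?_ ?_ x
  · simp [Perm.mul_apply]
  · intro k; simp [Perm.mul_apply]

lemma decomposeFin_iot {K : ℕ} (a : Perm (Fin K)) :
    Equiv.Perm.decomposeFin (iot a) = (0, a) :=
  Equiv.apply_symm_apply _ _

lemma decomposeFin_fst {K : ℕ} (ρ : Perm (Fin (K + 1))) :
    (Equiv.Perm.decomposeFin ρ).1 = ρ 0 := by
  conv_rhs => rw [← Equiv.symm_apply_apply Equiv.Perm.decomposeFin ρ]
  rw [show Equiv.Perm.decomposeFin.symm (Equiv.Perm.decomposeFin ρ)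
      = Equiv.Perm.decomposeFin.symm ((Equiv.Perm.decomposeFin ρ).1, (Equiv.Perm.decomposeFin ρ).2) from rfl]
  rw [Equiv.Perm.decomposeFin_symm_apply_zero]

/-- The permutation `0 ↦ i`, increasing elsewhere. -/
def tauP {K : ℕ} (i : Fin (K + 1)) : Perm (Fin (K + 1)) :=
  (Fin.cycleRange i).symm

@[simp] lemma tauP_zero {K : ℕ} (i : Fin (K + 1)) : tauP i 0 = i :=
  Fin.cycleRange_symm_zero i

@[simp] lemma tauP_succ {K : ℕ} (i : Fin (K + 1)) (k : Fin K) :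
    tauP i k.succ = i.succAbove k :=
  Fin.cycleRange_symm_succ i k

@[simp] lemma sign_tauP {K : ℕ} (i : Fin (K + 1)) : sign (tauP i) = (-1) ^ (i : ℕ) := by
  rw [tauP, show (Fin.cycleRange i).symm = (Fin.cycleRange i)⁻¹ from rfl,
    Equiv.Perm.sign_inv, Fin.sign_cycleRange]

lemma pairTuple_zero {K : ℕ} (v : Fin (K + 1) → g) (i j : Fin (K + 1)) (l : Fin K)
    (hl : (l : ℕ) = 0) : pairTuple v i j l = ⁅v i, v j⁆ := by
  simp [pairTuple, hl]

lemma pairTuple_pos {K : ℕ} (v : Fin (K + 2) → g) {i j : Fin (K + 2)} (hij : i < j)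
    (l : Fin (K + 1)) (hl : (l : ℕ) ≠ 0) :
    pairTuple v i j l
      = v (i.succAbove ((⟨(j : ℕ) - 1, by have := j.isLt; omega⟩ : Fin (K + 1)).succAbove
          (⟨(l : ℕ) - 1, by have := l.isLt; omega⟩ : Fin K))) := by
  rw [pairTuple, if_neg hl]
  congr 1
  apply Fin.ext
  have hi := i.isLt
  have hj := j.isLt
  have hl2 := l.isLt
  have hij' : (i : ℕ) < (j : ℕ) := hij
  simp only [succAbove_val]
  rw [Nat.mod_eq_of_lt (by split_ifs <;> omega)]
  split_ifs <;> omega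


/-- Bracket-insertion tuple. -/
def BtG {N : ℕ} (v : Fin (N + 1) → g) (ρ : Perm (Fin (N + 1))) (p : Fin N) : Fin N → g :=
  fun k => if k = p then ⁅v (ρ 0), v (ρ p.succ)⁆ else v (ρ k.succ)

def jP {K : ℕ} (j : Fin (K + 2)) : Fin (K + 1) := ⟨(j : ℕ) - 1, by have := j.isLt; omega⟩

def fwdP {K : ℕ} (i j : Fin (K + 2)) (σ : Perm (Fin (K + 1))) : Perm (Fin (K + 2)) :=
  tauP i * (iot (tauP (jP j)) * iot σ)

def bwdP {K : ℕ} (p : Fin (K + 1)) (ρ : Perm (Fin (K + 2))) :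
    (Fin (K + 2) × Fin (K + 2)) × Perm (Fin (K + 1)) :=
  ((ρ 0, ρ p.succ),
    (tauP (jP (ρ p.succ)))⁻¹ * (Equiv.Perm.decomposeFin ((tauP (ρ 0))⁻¹ * ρ)).2)

lemma fwdP_zero {K : ℕ} (i j : Fin (K + 2)) (σ : Perm (Fin (K + 1))) :
    fwdP i j σ 0 = i := by
  simp [fwdP, Perm.mul_apply]

lemma fwdP_succ {K : ℕ} (i j : Fin (K + 2)) (σ : Perm (Fin (K + 1))) (k : Fin (K + 1)) :
    fwdP i j σ k.succ = i.succAbove (tauP (jP j) (σ k)) := by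
  simp [fwdP, Perm.mul_apply]

lemma succAbove_jP {K : ℕ} {i j : Fin (K + 2)} (hij : i < j) :
    i.succAbove (jP j) = j := by
  apply Fin.ext
  rw [succAbove_val]
  have hij' : (i : ℕ) < (j : ℕ) := hij
  simp only [jP, show ¬ ((j : ℕ) - 1 < (i : ℕ)) by omega, ↓reduceIte]
  omega

lemma fwdP_sign {K : ℕ} (i j : Fin (K + 2)) (σ : Perm (Fin (K + 1))) (hij : i < j) :
    ((sign (fwdP i j σ) : ℤ)) = -(((-1 : ℤ) ^ ((i : ℕ) + (j : ℕ))) * (sign σ : ℤ)) := by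
  have hij' : (i : ℕ) < (j : ℕ) := hij
  have h1 : sign (fwdP i j σ) = (-1) ^ (i : ℕ) * ((-1) ^ ((jP j : ℕ)) * sign σ) := by
    simp [fwdP, sign_tauP, sign_iot]
  have h2 := congrArg (fun u : ℤˣ => (u : ℤ)) h1
  simp only [Units.val_mul, Units.val_pow_eq_pow_val, Units.val_neg, Units.val_one] at h2
  rw [h2]
  have hj1 : (jP j : ℕ) = (j : ℕ) - 1 := rfl
  have hsum : (i : ℕ) + (j : ℕ) = ((i : ℕ) + ((j : ℕ) - 1)) + 1 := by omega
  rw [hj1, hsum, pow_succ, pow_add]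
  ring

lemma perm_apply_inv_self {α : Type*} (f : Perm α) (x : α) : f (f⁻¹ x) = x :=
  Equiv.apply_symm_apply f x

lemma perm_inv_apply_self {α : Type*} (f : Perm α) (x : α) : f⁻¹ (f x) = x :=
  Equiv.symm_apply_apply f x

lemma keybij {K : ℕ} (v : Fin (K + 2) → g) (M₀ : (Fin (K + 1) → g) → ℝ) :
    (∑ i : Fin (K + 2), ∑ j : Fin (K + 2),
      if (i : ℕ) < (j : ℕ) then
        ((-1 : ℤ) ^ ((i : ℕ) + (j : ℕ))) •
          ∑ σ : Perm (Fin (K + 1)), ((sign σ : ℤ)) • M₀ (pairTuple v i j ∘ σ)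
      else 0)
    = - ∑ p : Fin (K + 1), ∑ ρ : Perm (Fin (K + 2)),
        (if ρ 0 < ρ p.succ then ((sign ρ : ℤ)) • M₀ (BtG v ρ p) else 0) := by
  classical
  have step1 :
      (∑ i : Fin (K + 2), ∑ j : Fin (K + 2),
        if (i : ℕ) < (j : ℕ) then
          ((-1 : ℤ) ^ ((i : ℕ) + (j : ℕ))) •
            ∑ σ : Perm (Fin (K + 1)), ((sign σ : ℤ)) • M₀ (pairTuple v i j ∘ σ)
        else 0)
      = ∑ x ∈ ((Finset.univ.filter
            (fun q : Fin (K + 2) × Fin (K + 2) => (q.1 : ℕ) < (q.2 : ℕ))) ×ˢ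
            (Finset.univ : Finset (Perm (Fin (K + 1))))),
          (((-1 : ℤ) ^ ((x.1.1 : ℕ) + (x.1.2 : ℕ))) * (sign x.2 : ℤ)) •
            M₀ (pairTuple v x.1.1 x.1.2 ∘ x.2) := by
    rw [Finset.sum_product]
    rw [Finset.sum_filter, ← Finset.univ_product_univ, Finset.sum_product]
    apply Finset.sum_congr rfl; intro i _
    apply Finset.sum_congr rfl; intro j _
    split_ifs with hij
    · rw [Finset.smul_sum]
      apply Finset.sum_congr rfl; intro σ _
      rw [smul_smul]
    · rfl
  have step3 :
      (∑ p : Fin (K + 1), ∑ ρ : Perm (Fin (K + 2)),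
        (if ρ 0 < ρ p.succ then ((sign ρ : ℤ)) • M₀ (BtG v ρ p) else 0))
      = ∑ y ∈ (Finset.univ.filter
          (fun y : Fin (K + 1) × Perm (Fin (K + 2)) => y.2 0 < y.2 y.1.succ)),
        ((sign y.2 : ℤ)) • M₀ (BtG v y.2 y.1) := by
    rw [Finset.sum_filter, ← Finset.univ_product_univ, Finset.sum_product]
  rw [step1, step3, ← Finset.sum_neg_distrib]
  apply Finset.sum_bij' (i := fun x _ => ((x.2⁻¹ 0 : Fin (K + 1)), fwdP x.1.1 x.1.2 x.2))
    (j := fun y _ => bwdP y.1 y.2)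
  · -- hi : maps into target
    rintro ⟨⟨i, j⟩, σ⟩ hx
    simp only [Finset.mem_product, Finset.mem_filter, Finset.mem_univ, true_and,
      and_true] at hx ⊢
    have hij : i < j := Fin.lt_def.mpr hx
    rw [fwdP_zero, fwdP_succ, perm_apply_inv_self, tauP_zero, succAbove_jP hij]
    exact hij
  · -- hj : maps back into source
    rintro ⟨p, ρ⟩ hy
    simp only [Finset.mem_filter, Finset.mem_univ, true_and] at hy
    simp only [bwdP, Finset.mem_product, Finset.mem_filter, Finset.mem_univ, true_and,
      and_true]
    exact Fin.lt_def.mp hy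
  · -- left inverse
    rintro ⟨⟨i, j⟩, σ⟩ hx
    simp only [Finset.mem_product, Finset.mem_filter, Finset.mem_univ, true_and,
      and_true] at hx
    have hij : i < j := Fin.lt_def.mpr hx
    have h0 : fwdP i j σ 0 = i := fwdP_zero i j σ
    have hsucc : fwdP i j σ (σ⁻¹ 0).succ = j := by
      rw [fwdP_succ, perm_apply_inv_self, tauP_zero, succAbove_jP hij]
    simp only [bwdP, h0, hsucc]
    have hη : (tauP i)⁻¹ * fwdP i j σ = iot (tauP (jP j) * σ) := by
      rw [fwdP, inv_mul_cancel_left, iot_mul]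
    rw [hη, decomposeFin_iot]
    simp
  · -- right inverse
    rintro ⟨p, ρ⟩ hy
    simp only [Finset.mem_filter, Finset.mem_univ, true_and] at hy
    have hij : ρ 0 < ρ p.succ := hy
    have hη0 : ((tauP (ρ 0))⁻¹ * ρ) 0 = 0 := by
      rw [Perm.mul_apply, Equiv.Perm.inv_eq_iff_eq, tauP_zero]
    have hdec : Equiv.Perm.decomposeFin ((tauP (ρ 0))⁻¹ * ρ)
        = (0, (Equiv.Perm.decomposeFin ((tauP (ρ 0))⁻¹ * ρ)).2) := by
      refine Prod.ext ?_ rfl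
      rw [decomposeFin_fst, hη0]
    have hηi : iot (Equiv.Perm.decomposeFin ((tauP (ρ 0))⁻¹ * ρ)).2 = (tauP (ρ 0))⁻¹ * ρ := by
      rw [iot, ← hdec, Equiv.symm_apply_apply]
    have hη2p : (Equiv.Perm.decomposeFin ((tauP (ρ 0))⁻¹ * ρ)).2 p = jP (ρ p.succ) := by
      apply Fin.succ_injective
      rw [← iot_succ, hηi, Perm.mul_apply, Equiv.Perm.inv_eq_iff_eq, tauP_succ,
        succAbove_jP hij]
    have hσp : ((tauP (jP (ρ p.succ)))⁻¹ *
        (Equiv.Perm.decomposeFin ((tauP (ρ 0))⁻¹ * ρ)).2) p = 0 := by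
      rw [Perm.mul_apply, hη2p, Equiv.Perm.inv_eq_iff_eq, tauP_zero]
    simp only [bwdP]
    refine Prod.ext ?_ ?_
    · -- p component
      show ((tauP (jP (ρ p.succ)))⁻¹ *
        (Equiv.Perm.decomposeFin ((tauP (ρ 0))⁻¹ * ρ)).2)⁻¹ 0 = p
      conv_lhs => rw [← hσp]
      exact perm_inv_apply_self _ _
    · -- ρ component
      show fwdP (ρ 0) (ρ p.succ) _ = ρ
      rw [fwdP, ← iot_mul, mul_inv_cancel_left, hηi, mul_inv_cancel_left]
  · -- term equality
    rintro ⟨⟨i, j⟩, σ⟩ hx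
    simp only [Finset.mem_product, Finset.mem_filter, Finset.mem_univ, true_and,
      and_true] at hx
    have hij : i < j := Fin.lt_def.mpr hx
    show _ = -(((sign (fwdP i j σ) : ℤ)) • M₀ (BtG v (fwdP i j σ) (σ⁻¹ 0)))
    rw [fwdP_sign i j σ hij, neg_smul, neg_neg]
    congr 1
    apply congrArg M₀
    funext k
    by_cases hk : k = σ⁻¹ 0
    · subst hk
      have hσ0 : σ (σ⁻¹ 0) = 0 := perm_apply_inv_self _ _
      have h1 : (pairTuple v i j ∘ σ) (σ⁻¹ 0) = ⁅v i, v j⁆ := by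
        have hz : ((σ (σ⁻¹ 0) : Fin (K + 1)) : ℕ) = 0 := by rw [hσ0]; rfl
        exact pairTuple_zero v i j _ hz
      have hsucc : fwdP i j σ (σ⁻¹ 0).succ = j := by
        rw [fwdP_succ, perm_apply_inv_self, tauP_zero, succAbove_jP hij]
      rw [h1]
      simp only [BtG, if_pos]
      rw [fwdP_zero, hsucc]
    · have hσk : σ k ≠ 0 := by
        intro hcon
        exact hk (by rw [← hcon, perm_inv_apply_self])
      have hσkv : ((σ k : Fin (K + 1)) : ℕ) ≠ 0 := by
        intro hcon; exact hσk (Fin.ext hcon)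
      have h1 : (pairTuple v i j ∘ σ) k
          = v (i.succAbove ((jP j).succAbove
              (⟨((σ k : Fin (K + 1)) : ℕ) - 1, by have := (σ k).isLt; omega⟩ : Fin K))) :=
        pairTuple_pos v hij (σ k) hσkv
      rw [h1]
      simp only [BtG, if_neg hk]
      rw [fwdP_succ]
      congr 2
      have hsk : (σ k : Fin (K + 1))
          = (⟨((σ k : Fin (K + 1)) : ℕ) - 1, by have := (σ k).isLt; omega⟩ : Fin K).succ := by
        apply Fin.ext
        simp only [Fin.val_succ]
        omega
      conv_rhs => rw [hsk, tauP_succ]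

lemma halving {N : ℕ} (v : Fin (N + 1) → g) (M₀ : (Fin N → g) → ℝ)
    (hMneg : ∀ (b : Fin N → g) (k : Fin N) (x : g),
      M₀ (Function.update b k (-x)) = - M₀ (Function.update b k x))
    (p : Fin N) :
    (∑ ρ : Perm (Fin (N + 1)),
        (if ρ 0 < ρ p.succ then ((sign ρ : ℤ)) • M₀ (BtG v ρ p) else 0))
      + (∑ ρ : Perm (Fin (N + 1)),
        (if ρ 0 < ρ p.succ then ((sign ρ : ℤ)) • M₀ (BtG v ρ p) else 0))
      = ∑ ρ : Perm (Fin (N + 1)), ((sign ρ : ℤ)) • M₀ (BtG v ρ p) := by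
  classical
  have hsplit : (∑ ρ : Perm (Fin (N + 1)), ((sign ρ : ℤ)) • M₀ (BtG v ρ p))
      = (∑ ρ : Perm (Fin (N + 1)),
          (if ρ 0 < ρ p.succ then ((sign ρ : ℤ)) • M₀ (BtG v ρ p) else 0))
      + (∑ ρ : Perm (Fin (N + 1)),
          (if ¬ (ρ 0 < ρ p.succ) then ((sign ρ : ℤ)) • M₀ (BtG v ρ p) else 0)) := by
    rw [← Finset.sum_add_distrib]
    apply Finset.sum_congr rfl; intro ρ _
    by_cases hc : ρ 0 < ρ p.succ <;> simp [hc]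
  have hne0 : (0 : Fin (N + 1)) ≠ p.succ := (Fin.succ_ne_zero p).symm
  have hswap : (∑ ρ : Perm (Fin (N + 1)),
        (if ¬ (ρ 0 < ρ p.succ) then ((sign ρ : ℤ)) • M₀ (BtG v ρ p) else 0))
      = ∑ ρ : Perm (Fin (N + 1)),
        (if ρ 0 < ρ p.succ then ((sign ρ : ℤ)) • M₀ (BtG v ρ p) else 0) := by
    refine Fintype.sum_equiv (Equiv.mulRight (Equiv.swap (0 : Fin (N + 1)) p.succ)) _ _ ?_
    intro ρ
    simp only [Equiv.coe_mulRight]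
    have happ0 : (ρ * Equiv.swap (0 : Fin (N + 1)) p.succ) 0 = ρ p.succ := by
      rw [Perm.mul_apply, Equiv.swap_apply_left]
    have happs : (ρ * Equiv.swap (0 : Fin (N + 1)) p.succ) p.succ = ρ 0 := by
      rw [Perm.mul_apply, Equiv.swap_apply_right]
    have hne : (ρ 0 : Fin (N + 1)) ≠ ρ p.succ := by
      intro hcon
      exact hne0 (ρ.injective hcon)
    have hnev : ((ρ 0 : Fin (N + 1)) : ℕ) ≠ ((ρ p.succ : Fin (N + 1)) : ℕ) := by
      intro hcon; exact hne (Fin.ext hcon)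
    have hcond : ((ρ * Equiv.swap (0 : Fin (N + 1)) p.succ) 0
        < (ρ * Equiv.swap (0 : Fin (N + 1)) p.succ) p.succ) ↔ ¬ (ρ 0 < ρ p.succ) := by
      rw [happ0, happs, Fin.lt_def, Fin.lt_def]
      constructor <;> intro hx <;> omega
    have hsign : ((sign (ρ * Equiv.swap (0 : Fin (N + 1)) p.succ) : ℤ)) = -(sign ρ : ℤ) := by
      rw [Equiv.Perm.sign_mul, Equiv.Perm.sign_swap hne0, mul_neg_one, Units.val_neg]
    have hBt : BtG v (ρ * Equiv.swap (0 : Fin (N + 1)) p.succ) p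
        = Function.update (BtG v ρ p) p (-⁅v (ρ 0), v (ρ p.succ)⁆) := by
      funext k
      by_cases hk : k = p
      · subst hk
        rw [BtG, if_pos rfl, Function.update_self, happ0, happs, ← lie_skew]
      · rw [BtG, if_neg hk, Function.update_of_ne hk, BtG, if_neg hk, Perm.mul_apply,
          Equiv.swap_apply_of_ne_of_ne (Fin.succ_ne_zero k)
            (fun hcon => hk (Fin.succ_injective _ hcon))]
    have hMB : M₀ (BtG v (ρ * Equiv.swap (0 : Fin (N + 1)) p.succ) p)
        = - M₀ (BtG v ρ p) := by
      have e : Function.update (BtG v ρ p) p ⁅v (ρ 0), v (ρ p.succ)⁆ = BtG v ρ p := by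
        funext k
        by_cases hk : k = p
        · subst hk; rw [Function.update_self, BtG, if_pos rfl]
        · rw [Function.update_of_ne hk]
      rw [hBt, hMneg, e]
    by_cases hc : ρ 0 < ρ p.succ
    · simp only [if_neg (not_not_intro hc), hcond, hc, not_true_eq_false, ↓reduceIte]
    · simp only [if_pos hc, hcond, hc, not_false_eq_true, ↓reduceIte, hsign, hMB, neg_smul,
        smul_neg, neg_neg]
  rw [hsplit, hswap]

section PLayer

variable (h : LieSubalgebra ℝ g) (pr : g →ₗ[ℝ] h) {m : ℕ}
variable (P : MultilinearMap ℝ (fun _ : Fin m => (h : Type _)) ℝ)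

def Mf (b : Fin (2 * m) → g) : ℝ :=
  P fun l : Fin m =>
    Rc h pr (b ⟨2 * (l : ℕ), (by have := l.isLt; omega : 2 * (l : ℕ) + 0 < 2 * m)⟩)
      (b ⟨2 * (l : ℕ) + 1, (by have := l.isLt; omega : 2 * (l : ℕ) + 1 + 0 < 2 * m)⟩)

def ixa (l : Fin m) : Fin (2 * m + 1) := ⟨2 * (l : ℕ) + 1, by have := l.isLt; omega⟩

def ixb (l : Fin m) : Fin (2 * m + 1) := ⟨2 * (l : ℕ) + 2, by have := l.isLt; omega⟩

def Wt (v : Fin (2 * m + 1) → g) (ρ : Perm (Fin (2 * m + 1))) : Fin m → (h : Type _) :=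
  fun l => Rc h pr (v (ρ (ixa l))) (v (ρ (ixb l)))

def Xc (v : Fin (2 * m + 1) → g) (l : Fin m) (ρ : Perm (Fin (2 * m + 1))) : (h : Type _) :=
  Rc h pr ⁅v (ρ 0), v (ρ (ixa l))⁆ (v (ρ (ixb l)))

def Yc (v : Fin (2 * m + 1) → g) (l : Fin m) (ρ : Perm (Fin (2 * m + 1))) : (h : Type _) :=
  ⁅pr (v (ρ 0)), Wt h pr v ρ l⁆

def Et (v : Fin (2 * m + 1) → g) (l : Fin m) : ℝ :=
  ∑ ρ : Perm (Fin (2 * m + 1)),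
    ((sign ρ : ℤ)) • P (Function.update (Wt h pr v ρ) l (Xc h pr v l ρ))

def Tt (v : Fin (2 * m + 1) → g) (l : Fin m) : ℝ :=
  ∑ ρ : Perm (Fin (2 * m + 1)),
    ((sign ρ : ℤ)) • P (Function.update (Wt h pr v ρ) l (Yc h pr v l ρ))

lemma Mf_update_neg (b : Fin (2 * m) → g) (k : Fin (2 * m)) (x : g) :
    Mf h pr P (Function.update b k (-x)) = - Mf h pr P (Function.update b k x) := by
  have hk := k.isLt
  obtain ⟨l₀, hl₀⟩ : ∃ l₀ : Fin m, (l₀ : ℕ) = (k : ℕ) / 2 := ⟨⟨(k : ℕ) / 2, by omega⟩, rfl⟩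
  rcases Nat.mod_two_eq_zero_or_one (k : ℕ) with hpar | hpar
  · -- k even, k = 2 * l₀
    have e1 : ∀ y : g, (fun l : Fin m =>
        Rc h pr (Function.update b k y ⟨2 * (l : ℕ), by have := l.isLt; omega⟩)
          (Function.update b k y ⟨2 * (l : ℕ) + 1, by have := l.isLt; omega⟩))
        = Function.update (fun l : Fin m =>
            Rc h pr (b ⟨2 * (l : ℕ), by have := l.isLt; omega⟩)
              (b ⟨2 * (l : ℕ) + 1, by have := l.isLt; omega⟩)) l₀
          (Rc h pr y (b ⟨2 * (l₀ : ℕ) + 1, by have := l₀.isLt; omega⟩)) := by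
      intro y
      funext l
      by_cases hl : l = l₀
      · subst hl
        rw [Function.update_self,
          show (⟨2 * (l : ℕ), by have := l.isLt; omega⟩ : Fin (2 * m)) = k from
            Fin.ext (by show 2 * (l : ℕ) = (k : ℕ); omega),
          Function.update_self,
          Function.update_of_ne (Fin.ne_of_val_ne
            (by show 2 * (l : ℕ) + 1 ≠ (k : ℕ); omega))]
      · have hlv : (l : ℕ) ≠ (l₀ : ℕ) := fun hcv => hl (Fin.ext hcv)
        rw [Function.update_of_ne hl,
          Function.update_of_ne (Fin.ne_of_val_ne
            (by show 2 * (l : ℕ) ≠ (k : ℕ); omega)),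
          Function.update_of_ne (Fin.ne_of_val_ne
            (by show 2 * (l : ℕ) + 1 ≠ (k : ℕ); omega))]
    rw [Mf, Mf, e1, e1, Rc_neg_left, MultilinearMap.map_update_neg]
  · -- k odd, k = 2 * l₀ + 1
    have e1 : ∀ y : g, (fun l : Fin m =>
        Rc h pr (Function.update b k y ⟨2 * (l : ℕ), by have := l.isLt; omega⟩)
          (Function.update b k y ⟨2 * (l : ℕ) + 1, by have := l.isLt; omega⟩))
        = Function.update (fun l : Fin m =>
            Rc h pr (b ⟨2 * (l : ℕ), by have := l.isLt; omega⟩)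
              (b ⟨2 * (l : ℕ) + 1, by have := l.isLt; omega⟩)) l₀
          (Rc h pr (b ⟨2 * (l₀ : ℕ), by have := l₀.isLt; omega⟩) y) := by
      intro y
      funext l
      by_cases hl : l = l₀
      · subst hl
        rw [Function.update_self,
          show (⟨2 * (l : ℕ) + 1, by have := l.isLt; omega⟩ : Fin (2 * m)) = k from
            Fin.ext (by show 2 * (l : ℕ) + 1 = (k : ℕ); omega),
          Function.update_self,
          Function.update_of_ne (Fin.ne_of_val_ne
            (by show 2 * (l : ℕ) ≠ (k : ℕ); omega))]
      · have hlv : (l : ℕ) ≠ (l₀ : ℕ) := fun hcv => hl (Fin.ext hcv)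
        rw [Function.update_of_ne hl,
          Function.update_of_ne (Fin.ne_of_val_ne
            (by show 2 * (l : ℕ) ≠ (k : ℕ); omega)),
          Function.update_of_ne (Fin.ne_of_val_ne
            (by show 2 * (l : ℕ) + 1 ≠ (k : ℕ); omega))]
    rw [Mf, Mf, e1, e1, Rc_neg_right, MultilinearMap.map_update_neg]

lemma upd_swap {β : Type*} (w : Fin m → β) (a b : Fin m) (y : β) :
    Function.update (w ∘ (Equiv.swap a b)) b y
      = (Function.update w a y) ∘ (Equiv.swap a b) := by
  funext k
  by_cases hk : k = b
  · subst hk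
    rw [Function.update_self, Function.comp_apply, Equiv.swap_apply_right,
      Function.update_self]
  · rw [Function.update_of_ne hk, Function.comp_apply, Function.comp_apply,
      Function.update_of_ne ?_]
    intro hcon
    have := congrArg (Equiv.swap a b) hcon
    rw [Equiv.swap_apply_self, Equiv.swap_apply_left] at this
    exact hk this

@[simp] lemma ixa_val (l : Fin m) : ((ixa (m := m) l : Fin (2 * m + 1)) : ℕ) = 2 * (l : ℕ) + 1 := rfl

@[simp] lemma ixb_val (l : Fin m) : ((ixb (m := m) l : Fin (2 * m + 1)) : ℕ) = 2 * (l : ℕ) + 2 := rfl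

lemma Tt_eq
    (hsymm : ∀ (σ : Equiv.Perm (Fin m)) (w : Fin m → h), P (w ∘ σ) = P w)
    (v : Fin (2 * m + 1) → g) (l l' : Fin m) :
    Tt h pr P v l = Tt h pr P v l' := by
  by_cases hll : l = l'
  · rw [hll]
  have hlv : (l : ℕ) ≠ (l' : ℕ) := fun hcv => hll (Fin.ext hcv)
  set π : Perm (Fin (2 * m + 1)) :=
    Equiv.swap (ixa l) (ixa l') * Equiv.swap (ixb l) (ixb l') with hπ
  have hπ0 : π 0 = 0 := by
    have sB : Equiv.swap (ixb l) (ixb l') (0 : Fin (2 * m + 1)) = 0 :=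
      Equiv.swap_apply_of_ne_of_ne
        (Fin.ne_of_val_ne (by simp only [ixb_val, Fin.val_zero]; omega))
        (Fin.ne_of_val_ne (by simp only [ixb_val, Fin.val_zero]; omega))
    have sA : Equiv.swap (ixa l) (ixa l') (0 : Fin (2 * m + 1)) = 0 :=
      Equiv.swap_apply_of_ne_of_ne
        (Fin.ne_of_val_ne (by simp only [ixa_val, Fin.val_zero]; omega))
        (Fin.ne_of_val_ne (by simp only [ixa_val, Fin.val_zero]; omega))
    rw [hπ, Perm.mul_apply, sB, sA]
  have hπa : ∀ k : Fin m, π (ixa k) = ixa (Equiv.swap l l' k) := by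
    intro k
    have sB : Equiv.swap (ixb l) (ixb l') (ixa k) = ixa k :=
      Equiv.swap_apply_of_ne_of_ne
        (Fin.ne_of_val_ne (by simp only [ixa_val, ixb_val]; omega))
        (Fin.ne_of_val_ne (by simp only [ixa_val, ixb_val]; omega))
    rw [hπ, Perm.mul_apply, sB]
    by_cases hk : k = l
    · subst hk
      rw [Equiv.swap_apply_left, Equiv.swap_apply_left]
    by_cases hk' : k = l'
    · subst hk'
      rw [Equiv.swap_apply_right, Equiv.swap_apply_right]
    have h1 : (k : ℕ) ≠ (l : ℕ) := fun hcv => hk (Fin.ext hcv)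
    have h2 : (k : ℕ) ≠ (l' : ℕ) := fun hcv => hk' (Fin.ext hcv)
    rw [Equiv.swap_apply_of_ne_of_ne
        (Fin.ne_of_val_ne (by simp only [ixa_val]; omega))
        (Fin.ne_of_val_ne (by simp only [ixa_val]; omega)),
      Equiv.swap_apply_of_ne_of_ne hk hk']
  have hπb : ∀ k : Fin m, π (ixb k) = ixb (Equiv.swap l l' k) := by
    intro k
    by_cases hk : k = l
    · subst hk
      have sB : Equiv.swap (ixb k) (ixb l') (ixb k) = ixb l' := Equiv.swap_apply_left _ _
      have sA : Equiv.swap (ixa k) (ixa l') (ixb l') = ixb l' :=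
        Equiv.swap_apply_of_ne_of_ne
          (Fin.ne_of_val_ne (by simp only [ixa_val, ixb_val]; omega))
          (Fin.ne_of_val_ne (by simp only [ixa_val, ixb_val]; omega))
      rw [hπ, Perm.mul_apply, sB, sA, Equiv.swap_apply_left]
    by_cases hk' : k = l'
    · subst hk'
      have sB : Equiv.swap (ixb l) (ixb k) (ixb k) = ixb l := Equiv.swap_apply_right _ _
      have sA : Equiv.swap (ixa l) (ixa k) (ixb l) = ixb l :=
        Equiv.swap_apply_of_ne_of_ne
          (Fin.ne_of_val_ne (by simp only [ixa_val, ixb_val]; omega))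
          (Fin.ne_of_val_ne (by simp only [ixa_val, ixb_val]; omega))
      rw [hπ, Perm.mul_apply, sB, sA, Equiv.swap_apply_right]
    have h1 : (k : ℕ) ≠ (l : ℕ) := fun hcv => hk (Fin.ext hcv)
    have h2 : (k : ℕ) ≠ (l' : ℕ) := fun hcv => hk' (Fin.ext hcv)
    have sB : Equiv.swap (ixb l) (ixb l') (ixb k) = ixb k :=
      Equiv.swap_apply_of_ne_of_ne
        (Fin.ne_of_val_ne (by simp only [ixb_val]; omega))
        (Fin.ne_of_val_ne (by simp only [ixb_val]; omega))
    have sA : Equiv.swap (ixa l) (ixa l') (ixb k) = ixb k :=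
      Equiv.swap_apply_of_ne_of_ne
        (Fin.ne_of_val_ne (by simp only [ixa_val, ixb_val]; omega))
        (Fin.ne_of_val_ne (by simp only [ixa_val, ixb_val]; omega))
    rw [hπ, Perm.mul_apply, sB, sA, Equiv.swap_apply_of_ne_of_ne hk hk']
  have hWt : ∀ ρ : Perm (Fin (2 * m + 1)),
      Wt h pr v (ρ * π) = Wt h pr v ρ ∘ (Equiv.swap l l') := by
    intro ρ
    funext k
    show Rc h pr (v ((ρ * π) (ixa k))) (v ((ρ * π) (ixb k)))
      = Rc h pr (v (ρ (ixa (Equiv.swap l l' k)))) (v (ρ (ixb (Equiv.swap l l' k))))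
    rw [Perm.mul_apply, hπa, Perm.mul_apply, hπb]
  have hsπ : ∀ ρ : Perm (Fin (2 * m + 1)), ((sign (ρ * π) : ℤ)) = ((sign ρ : ℤ)) := by
    intro ρ
    rw [hπ, ← mul_assoc, Equiv.Perm.sign_mul, Equiv.Perm.sign_mul,
      Equiv.Perm.sign_swap (Fin.ne_of_val_ne (by simp only [ixa_val]; omega)),
      Equiv.Perm.sign_swap (Fin.ne_of_val_ne (by simp only [ixb_val]; omega)),
      mul_assoc, Int.units_mul_self, mul_one]
  simp only [Tt, Yc]
  refine Fintype.sum_equiv (Equiv.mulRight π) _ _ ?_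
  intro ρ
  simp only [Equiv.coe_mulRight]
  have h0 : (ρ * π) 0 = ρ 0 := by rw [Perm.mul_apply, hπ0]
  rw [hsπ ρ, hWt ρ, h0,
    show (Wt h pr v ρ ∘ (Equiv.swap l l')) l' = Wt h pr v ρ l from by
      rw [Function.comp_apply, Equiv.swap_apply_right],
    upd_swap (Wt h pr v ρ) l l' ⁅pr (v (ρ 0)), Wt h pr v ρ l⁆,
    hsymm (Equiv.swap l l') (Function.update (Wt h pr v ρ) l
      ⁅pr (v (ρ 0)), Wt h pr v ρ l⁆)]

lemma Tt_zero
    (hsymm : ∀ (σ : Equiv.Perm (Fin m)) (w : Fin m → h), P (w ∘ σ) = P w)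
    (hinv : ∀ (x : h) (w : Fin m → h),
      ∑ i : Fin m, P (Function.update w i ⁅x, w i⁆) = 0)
    (v : Fin (2 * m + 1) → g) (l : Fin m) : Tt h pr P v l = 0 := by
  have hm : 0 < m := l.pos
  have hsum : ∑ l' : Fin m, Tt h pr P v l' = 0 := by
    simp only [Tt, Yc]
    rw [Finset.sum_comm]
    refine Finset.sum_eq_zero fun ρ _ => ?_
    rw [← Finset.smul_sum, hinv (pr (v (ρ 0))) (Wt h pr v ρ), smul_zero]
  have hconst : ∑ l' : Fin m, Tt h pr P v l' = (m : ℝ) * Tt h pr P v l := by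
    rw [Finset.sum_congr rfl fun l' _ => Tt_eq h pr P hsymm v l' l,
      Finset.sum_const, Finset.card_univ, Fintype.card_fin, nsmul_eq_mul]
  rw [hconst] at hsum
  have hm' : (m : ℝ) ≠ 0 := Nat.cast_ne_zero.mpr (by omega)
  rcases mul_eq_zero.mp hsum with hcon | hok
  · exact absurd hcon hm'
  · exact hok

lemma Et_eq_Tt (v : Fin (2 * m + 1) → g) (l : Fin m) :
    Et h pr P v l = Tt h pr P v l := by
  set c3 : Perm (Fin (2 * m + 1)) :=
    Equiv.swap (0 : Fin (2 * m + 1)) (ixa l) * Equiv.swap (ixa l) (ixb l) with hc3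
  have hne0a : (0 : Fin (2 * m + 1)) ≠ ixa l :=
    Fin.ne_of_val_ne (by simp only [ixa_val, Fin.val_zero]; omega)
  have hne0b : (0 : Fin (2 * m + 1)) ≠ ixb l :=
    Fin.ne_of_val_ne (by simp only [ixb_val, Fin.val_zero]; omega)
  have hneab : (ixa l : Fin (2 * m + 1)) ≠ ixb l :=
    Fin.ne_of_val_ne (by simp only [ixa_val, ixb_val]; omega)
  have hc30 : c3 0 = ixa l := by
    have sB : Equiv.swap (ixa l) (ixb l) (0 : Fin (2 * m + 1)) = 0 :=
      Equiv.swap_apply_of_ne_of_ne hne0a hne0b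
    rw [hc3, Perm.mul_apply, sB, Equiv.swap_apply_left]
  have hc3a : c3 (ixa l) = ixb l := by
    have sA : Equiv.swap (0 : Fin (2 * m + 1)) (ixa l) (ixb l) = ixb l :=
      Equiv.swap_apply_of_ne_of_ne (Ne.symm hne0b) (Ne.symm hneab)
    rw [hc3, Perm.mul_apply, Equiv.swap_apply_left, sA]
  have hc3b : c3 (ixb l) = 0 := by
    rw [hc3, Perm.mul_apply, Equiv.swap_apply_right, Equiv.swap_apply_right]
  have hc3fix : ∀ k : Fin m, k ≠ l → c3 (ixa k) = ixa k ∧ c3 (ixb k) = ixb k := by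
    intro k hk
    have hkv : (k : ℕ) ≠ (l : ℕ) := fun hcv => hk (Fin.ext hcv)
    constructor
    · have sB : Equiv.swap (ixa l) (ixb l) (ixa k) = ixa k :=
        Equiv.swap_apply_of_ne_of_ne
          (Fin.ne_of_val_ne (by simp only [ixa_val]; omega))
          (Fin.ne_of_val_ne (by simp only [ixa_val, ixb_val]; omega))
      rw [hc3, Perm.mul_apply, sB,
        Equiv.swap_apply_of_ne_of_ne
          (Fin.ne_of_val_ne (by simp only [ixa_val, Fin.val_zero]; omega))
          (Fin.ne_of_val_ne (by simp only [ixa_val]; omega))]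
    · have sB : Equiv.swap (ixa l) (ixb l) (ixb k) = ixb k :=
        Equiv.swap_apply_of_ne_of_ne
          (Fin.ne_of_val_ne (by simp only [ixa_val, ixb_val]; omega))
          (Fin.ne_of_val_ne (by simp only [ixb_val]; omega))
      rw [hc3, Perm.mul_apply, sB,
        Equiv.swap_apply_of_ne_of_ne
          (Fin.ne_of_val_ne (by simp only [ixb_val, Fin.val_zero]; omega))
          (Fin.ne_of_val_ne (by simp only [ixa_val, ixb_val]; omega))]
  have hs3 : ∀ ρ : Perm (Fin (2 * m + 1)), ((sign (ρ * c3) : ℤ)) = ((sign ρ : ℤ)) := by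
    intro ρ
    rw [hc3, ← mul_assoc, Equiv.Perm.sign_mul, Equiv.Perm.sign_mul,
      Equiv.Perm.sign_swap hne0a, Equiv.Perm.sign_swap hneab,
      mul_assoc, Int.units_mul_self, mul_one]
  have hWc3 : ∀ (ρ : Perm (Fin (2 * m + 1))) (Z : (h : Type _)),
      Function.update (Wt h pr v (ρ * c3)) l Z = Function.update (Wt h pr v ρ) l Z := by
    intro ρ Z
    funext k
    by_cases hk : k = l
    · subst hk; rw [Function.update_self, Function.update_self]
    · rw [Function.update_of_ne hk, Function.update_of_ne hk]
      show Rc h pr (v ((ρ * c3) (ixa k))) (v ((ρ * c3) (ixb k)))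
        = Rc h pr (v (ρ (ixa k))) (v (ρ (ixb k)))
      rw [Perm.mul_apply, (hc3fix k hk).1, Perm.mul_apply, (hc3fix k hk).2]
  have hshift : ∀ F : Perm (Fin (2 * m + 1)) → ℝ,
      (∑ ρ : Perm (Fin (2 * m + 1)), F ρ)
        = ∑ ρ : Perm (Fin (2 * m + 1)), F (ρ * c3) :=
    fun F => (Fintype.sum_equiv (Equiv.mulRight c3) _ F (fun ρ => rfl)).symm
  have hX2 : ∀ ρ : Perm (Fin (2 * m + 1)), Xc h pr v l (ρ * c3)
      = Rc h pr ⁅v (ρ (ixa l)), v (ρ (ixb l))⁆ (v (ρ 0)) := by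
    intro ρ
    show Rc h pr ⁅v ((ρ * c3) 0), v ((ρ * c3) (ixa l))⁆ (v ((ρ * c3) (ixb l))) = _
    rw [Perm.mul_apply, hc30, Perm.mul_apply, hc3a, Perm.mul_apply, hc3b]
  have hX3 : ∀ ρ : Perm (Fin (2 * m + 1)), Xc h pr v l ((ρ * c3) * c3)
      = Rc h pr ⁅v (ρ (ixb l)), v (ρ 0)⁆ (v (ρ (ixa l))) := by
    intro ρ
    rw [hX2 (ρ * c3), Perm.mul_apply, hc3a, Perm.mul_apply, hc3b, Perm.mul_apply, hc30]
  have hY2 : ∀ ρ : Perm (Fin (2 * m + 1)), Yc h pr v l (ρ * c3)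
      = ⁅pr (v (ρ (ixa l))), Rc h pr (v (ρ (ixb l))) (v (ρ 0))⁆ := by
    intro ρ
    show ⁅pr (v ((ρ * c3) 0)), Rc h pr (v ((ρ * c3) (ixa l))) (v ((ρ * c3) (ixb l)))⁆ = _
    rw [Perm.mul_apply, hc30, Perm.mul_apply, hc3a, Perm.mul_apply, hc3b]
  have hY3 : ∀ ρ : Perm (Fin (2 * m + 1)), Yc h pr v l ((ρ * c3) * c3)
      = ⁅pr (v (ρ (ixb l))), Rc h pr (v (ρ 0)) (v (ρ (ixa l)))⁆ := by
    intro ρ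
    rw [hY2 (ρ * c3), Perm.mul_apply, hc3a, Perm.mul_apply, hc3b, Perm.mul_apply, hc30]
  have hXY : ∀ ρ : Perm (Fin (2 * m + 1)),
      Xc h pr v l ρ + Xc h pr v l (ρ * c3) + Xc h pr v l ((ρ * c3) * c3)
      = Yc h pr v l ρ + Yc h pr v l (ρ * c3) + Yc h pr v l ((ρ * c3) * c3) := by
    intro ρ
    rw [hX2, hX3, hY2, hY3]
    exact bianchi h pr (v (ρ 0)) (v (ρ (ixa l))) (v (ρ (ixb l)))
  have eA : Et h pr P v l = ∑ ρ : Perm (Fin (2 * m + 1)),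
      ((sign ρ : ℤ)) • P (Function.update (Wt h pr v ρ) l (Xc h pr v l (ρ * c3))) := by
    rw [Et, hshift]
    refine Finset.sum_congr rfl fun ρ _ => ?_
    rw [hs3 ρ, hWc3]
  have eB : Et h pr P v l = ∑ ρ : Perm (Fin (2 * m + 1)),
      ((sign ρ : ℤ)) • P (Function.update (Wt h pr v ρ) l (Xc h pr v l ((ρ * c3) * c3))) := by
    rw [eA, hshift]
    refine Finset.sum_congr rfl fun ρ _ => ?_
    rw [hs3 ρ, hWc3]
  have tA : Tt h pr P v l = ∑ ρ : Perm (Fin (2 * m + 1)),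
      ((sign ρ : ℤ)) • P (Function.update (Wt h pr v ρ) l (Yc h pr v l (ρ * c3))) := by
    rw [Tt, hshift]
    refine Finset.sum_congr rfl fun ρ _ => ?_
    rw [hs3 ρ, hWc3]
  have tB : Tt h pr P v l = ∑ ρ : Perm (Fin (2 * m + 1)),
      ((sign ρ : ℤ)) • P (Function.update (Wt h pr v ρ) l (Yc h pr v l ((ρ * c3) * c3))) := by
    rw [tA, hshift]
    refine Finset.sum_congr rfl fun ρ _ => ?_
    rw [hs3 ρ, hWc3]
  have sum3X : Et h pr P v l + Et h pr P v l + Et h pr P v l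
      = ∑ ρ : Perm (Fin (2 * m + 1)), ((sign ρ : ℤ)) •
          P (Function.update (Wt h pr v ρ) l
            (Xc h pr v l ρ + Xc h pr v l (ρ * c3) + Xc h pr v l ((ρ * c3) * c3))) := by
    nth_rewrite 2 [eA]
    nth_rewrite 2 [eB]
    rw [Et, ← Finset.sum_add_distrib, ← Finset.sum_add_distrib]
    refine Finset.sum_congr rfl fun ρ _ => ?_
    rw [MultilinearMap.map_update_add, MultilinearMap.map_update_add, smul_add, smul_add]
  have sum3Y : Tt h pr P v l + Tt h pr P v l + Tt h pr P v l
      = ∑ ρ : Perm (Fin (2 * m + 1)), ((sign ρ : ℤ)) •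
          P (Function.update (Wt h pr v ρ) l
            (Yc h pr v l ρ + Yc h pr v l (ρ * c3) + Yc h pr v l ((ρ * c3) * c3))) := by
    nth_rewrite 2 [tA]
    nth_rewrite 2 [tB]
    rw [Tt, ← Finset.sum_add_distrib, ← Finset.sum_add_distrib]
    refine Finset.sum_congr rfl fun ρ _ => ?_
    rw [MultilinearMap.map_update_add, MultilinearMap.map_update_add, smul_add, smul_add]
  have big : Et h pr P v l + Et h pr P v l + Et h pr P v l
      = Tt h pr P v l + Tt h pr P v l + Tt h pr P v l := by
    rw [sum3X, sum3Y]
    exact Finset.sum_congr rfl fun ρ _ => by rw [hXY ρ]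
  linarith

lemma Ep_zero
    (hsymm : ∀ (σ : Equiv.Perm (Fin m)) (w : Fin m → h), P (w ∘ σ) = P w)
    (hinv : ∀ (x : h) (w : Fin m → h),
      ∑ i : Fin m, P (Function.update w i ⁅x, w i⁆) = 0)
    (v : Fin (2 * m + 1) → g) (p : Fin (2 * m)) :
    (∑ ρ : Perm (Fin (2 * m + 1)), ((sign ρ : ℤ)) • Mf h pr P (BtG v ρ p)) = 0 := by
  have hp := p.isLt
  obtain ⟨l, hl⟩ : ∃ l : Fin m, (l : ℕ) = (p : ℕ) / 2 := ⟨⟨(p : ℕ) / 2, by omega⟩, rfl⟩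
  rcases Nat.mod_two_eq_zero_or_one (p : ℕ) with hpar | hpar
  · -- p even : p = 2 l
    have hMB : ∀ ρ : Perm (Fin (2 * m + 1)), Mf h pr P (BtG v ρ p)
        = P (Function.update (Wt h pr v ρ) l (Xc h pr v l ρ)) := by
      intro ρ
      rw [Mf]
      congr 1
      funext k
      simp only [BtG]
      by_cases hk : k = l
      · subst hk
        rw [Function.update_self]
        rw [if_pos (Fin.ext (show 2 * (k : ℕ) = (p : ℕ) by omega)),
          if_neg (Fin.ne_of_val_ne (show 2 * (k : ℕ) + 1 ≠ (p : ℕ) by omega))]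
        show Rc h pr ⁅v (ρ 0), v (ρ p.succ)⁆
            (v (ρ ((⟨2 * (k : ℕ) + 1, by have := k.isLt; omega⟩ : Fin (2 * m)).succ)))
          = Xc h pr v k ρ
        rw [show (p.succ : Fin (2 * m + 1)) = ixa k from
            Fin.ext (by simp only [Fin.val_succ, ixa_val] <;> omega),
          show ((⟨2 * (k : ℕ) + 1, by have := k.isLt; omega⟩ : Fin (2 * m)).succ) = ixb k from
            Fin.ext (by simp only [Fin.val_succ, ixb_val] <;> omega)]
        rfl
      · have hkv : (k : ℕ) ≠ (l : ℕ) := fun hcv => hk (Fin.ext hcv)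
        rw [Function.update_of_ne hk]
        rw [if_neg (Fin.ne_of_val_ne (show 2 * (k : ℕ) ≠ (p : ℕ) by omega)),
          if_neg (Fin.ne_of_val_ne (show 2 * (k : ℕ) + 1 ≠ (p : ℕ) by omega))]
        show Rc h pr
            (v (ρ ((⟨2 * (k : ℕ), by have := k.isLt; omega⟩ : Fin (2 * m)).succ)))
            (v (ρ ((⟨2 * (k : ℕ) + 1, by have := k.isLt; omega⟩ : Fin (2 * m)).succ)))
          = Wt h pr v ρ k
        rw [show ((⟨2 * (k : ℕ), by have := k.isLt; omega⟩ : Fin (2 * m)).succ) = ixa k from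
            Fin.ext (by simp only [Fin.val_succ, ixa_val] <;> omega),
          show ((⟨2 * (k : ℕ) + 1, by have := k.isLt; omega⟩ : Fin (2 * m)).succ) = ixb k from
            Fin.ext (by simp only [Fin.val_succ, ixb_val] <;> omega)]
        rfl
    calc (∑ ρ : Perm (Fin (2 * m + 1)), ((sign ρ : ℤ)) • Mf h pr P (BtG v ρ p))
        = Et h pr P v l := Finset.sum_congr rfl fun ρ _ => by rw [hMB ρ]
      _ = Tt h pr P v l := Et_eq_Tt h pr P v l
      _ = 0 := Tt_zero h pr P hsymm hinv v l
  · -- p odd : p = 2 l + 1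
    have hneab : (ixa l : Fin (2 * m + 1)) ≠ ixb l :=
      Fin.ne_of_val_ne (by simp only [ixa_val, ixb_val]; omega)
    have hshift : ∀ F : Perm (Fin (2 * m + 1)) → ℝ,
        (∑ ρ : Perm (Fin (2 * m + 1)), F ρ)
          = ∑ ρ : Perm (Fin (2 * m + 1)), F (ρ * Equiv.swap (ixa l) (ixb l)) :=
      fun F => (Fintype.sum_equiv (Equiv.mulRight (Equiv.swap (ixa l) (ixb l)))
        _ F (fun ρ => rfl)).symm
    have hsign : ∀ ρ : Perm (Fin (2 * m + 1)),
        ((sign (ρ * Equiv.swap (ixa l) (ixb l)) : ℤ)) = -((sign ρ : ℤ)) := by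
      intro ρ
      rw [Equiv.Perm.sign_mul, Equiv.Perm.sign_swap hneab, mul_neg_one, Units.val_neg]
    have hMB : ∀ ρ : Perm (Fin (2 * m + 1)),
        Mf h pr P (BtG v (ρ * Equiv.swap (ixa l) (ixb l)) p)
        = P (Function.update (Wt h pr v ρ) l (- Xc h pr v l ρ)) := by
      intro ρ
      rw [Mf]
      congr 1
      funext k
      simp only [BtG]
      by_cases hk : k = l
      · subst hk
        rw [Function.update_self]
        rw [if_neg (Fin.ne_of_val_ne (show 2 * (k : ℕ) ≠ (p : ℕ) by omega)),
          if_pos (Fin.ext (show 2 * (k : ℕ) + 1 = (p : ℕ) by omega))]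
        rw [show ((⟨2 * (k : ℕ), by have := k.isLt; omega⟩ : Fin (2 * m)).succ) = ixa k from
            Fin.ext (by simp only [Fin.val_succ, ixa_val] <;> omega),
          show (p.succ : Fin (2 * m + 1)) = ixb k from
            Fin.ext (by simp only [Fin.val_succ, ixb_val] <;> omega)]
        rw [Perm.mul_apply, Equiv.swap_apply_left, Perm.mul_apply,
          Equiv.swap_apply_of_ne_of_ne
            (Fin.ne_of_val_ne (by simp only [ixa_val, Fin.val_zero]; omega)).symm
            (Fin.ne_of_val_ne (by simp only [ixb_val, Fin.val_zero]; omega)).symm,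
          Perm.mul_apply, Equiv.swap_apply_right]
        rw [show Rc h pr (v (ρ (ixb k))) ⁅v (ρ 0), v (ρ (ixa k))⁆
            = - Xc h pr v k ρ from by rw [Xc, Rc_skew]]
      · have hkv : (k : ℕ) ≠ (l : ℕ) := fun hcv => hk (Fin.ext hcv)
        rw [Function.update_of_ne hk]
        rw [if_neg (Fin.ne_of_val_ne (show 2 * (k : ℕ) ≠ (p : ℕ) by omega)),
          if_neg (Fin.ne_of_val_ne (show 2 * (k : ℕ) + 1 ≠ (p : ℕ) by omega))]
        rw [show ((⟨2 * (k : ℕ), by have := k.isLt; omega⟩ : Fin (2 * m)).succ) = ixa k from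
            Fin.ext (by simp only [Fin.val_succ, ixa_val] <;> omega),
          show ((⟨2 * (k : ℕ) + 1, by have := k.isLt; omega⟩ : Fin (2 * m)).succ) = ixb k from
            Fin.ext (by simp only [Fin.val_succ, ixb_val] <;> omega)]
        rw [Perm.mul_apply,
          Equiv.swap_apply_of_ne_of_ne
            (Fin.ne_of_val_ne (by simp only [ixa_val]; omega))
            (Fin.ne_of_val_ne (by simp only [ixa_val, ixb_val]; omega)),
          Perm.mul_apply,
          Equiv.swap_apply_of_ne_of_ne
            (Fin.ne_of_val_ne (by simp only [ixa_val, ixb_val]; omega))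
            (Fin.ne_of_val_ne (by simp only [ixb_val]; omega))]
        rfl
    calc (∑ ρ : Perm (Fin (2 * m + 1)), ((sign ρ : ℤ)) • Mf h pr P (BtG v ρ p))
        = ∑ ρ : Perm (Fin (2 * m + 1)),
            ((sign (ρ * Equiv.swap (ixa l) (ixb l)) : ℤ)) •
              Mf h pr P (BtG v (ρ * Equiv.swap (ixa l) (ixb l)) p) :=
          hshift _
      _ = Et h pr P v l := by
          refine Finset.sum_congr rfl fun ρ _ => ?_
          rw [hsign ρ, hMB ρ, MultilinearMap.map_update_neg, smul_neg, neg_smul, neg_neg]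
      _ = Tt h pr P v l := Et_eq_Tt h pr P v l
      _ = 0 := Tt_zero h pr P hsymm hinv v l

end PLayer

end ChernWeilAux

/-- **The Chern-Weil cochain of an h-invariant symmetric polynomial applied to the
curvature of an h-equivariant projection is a Lie algebra cocycle:**
∂_Lie P(R) = 0. -/
theorem chern_weil_cocycle (h : LieSubalgebra ℝ g) (pr : g →ₗ[ℝ] h)
    (hpr : ∀ x : h, pr (x : g) = x)
    (heq : ∀ (x : h) (α : g), pr ⁅(x : g), α⁆ = ⁅x, pr α⁆)
    (m : ℕ) (P : MultilinearMap ℝ (fun _ : Fin m => (h : Type _)) ℝ)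
    (hsymm : ∀ (σ : Equiv.Perm (Fin m)) (w : Fin m → h), P (w ∘ σ) = P w)
    (hinv : ∀ (x : h) (w : Fin m → h),
      ∑ i : Fin m, P (Function.update w i ⁅x, w i⁆) = 0)
    (c : (Fin (2 * m) → g) → ℝ)
    (hc : ∀ a : Fin (2 * m) → g,
      c a = ∑ σ : Equiv.Perm (Fin (2 * m)),
        ((Equiv.Perm.sign σ : ℤ)) •
          P (fun l : Fin m =>
            ⁅pr (a (σ ⟨2 * (l : ℕ), by have := l.isLt; omega⟩)),
              pr (a (σ ⟨2 * (l : ℕ) + 1, by have := l.isLt; omega⟩))⁆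
            - pr ⁅a (σ ⟨2 * (l : ℕ), by have := l.isLt; omega⟩),
                a (σ ⟨2 * (l : ℕ) + 1, by have := l.isLt; omega⟩)⁆)) :
    ∀ v : Fin (2 * m + 1) → g, ceDiffTriv (2 * m) c v = 0 := by
  intro v
  cases m with
  | zero =>
      have hno : ∀ i j : Fin (2 * 0 + 1), ¬ ((i : ℕ) < (j : ℕ)) := by decide
      simp [ceDiffTriv, hno]
  | succ m' =>
      have hMf : ∀ (i j : Fin (2 * (m' + 1) + 1)) (σ : Equiv.Perm (Fin (2 * (m' + 1)))),
          P (fun l : Fin (m' + 1) =>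
            ⁅pr (pairTuple v i j (σ ⟨2 * (l : ℕ), by have := l.isLt; omega⟩)),
              pr (pairTuple v i j (σ ⟨2 * (l : ℕ) + 1, by have := l.isLt; omega⟩))⁆
            - pr ⁅pairTuple v i j (σ ⟨2 * (l : ℕ), by have := l.isLt; omega⟩),
                pairTuple v i j (σ ⟨2 * (l : ℕ) + 1, by have := l.isLt; omega⟩)⁆)
          = ChernWeilAux.Mf h pr P (pairTuple v i j ∘ σ) := fun _ _ _ => rfl
      have hfull : ∀ p : Fin (2 * (m' + 1)),
          (∑ ρ : Equiv.Perm (Fin (2 * (m' + 1) + 1)),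
            ((Equiv.Perm.sign ρ : ℤ)) • ChernWeilAux.Mf h pr P (ChernWeilAux.BtG v ρ p)) = 0 :=
        fun p => ChernWeilAux.Ep_zero h pr P hsymm hinv v p
      have hfilter : ∀ p : Fin (2 * (m' + 1)),
          (∑ ρ : Equiv.Perm (Fin (2 * (m' + 1) + 1)),
            (if ρ 0 < ρ p.succ then
              ((Equiv.Perm.sign ρ : ℤ)) • ChernWeilAux.Mf h pr P (ChernWeilAux.BtG v ρ p)
            else 0)) = 0 := by
        intro p
        have h1 := ChernWeilAux.halving (N := 2 * (m' + 1)) v (ChernWeilAux.Mf h pr P)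
          (ChernWeilAux.Mf_update_neg h pr P) p
        rw [hfull p] at h1
        linarith
      have key := ChernWeilAux.keybij (K := 2 * m' + 1) v (ChernWeilAux.Mf h pr P)
      unfold ceDiffTriv
      simp only [hc, hMf]
      refine Eq.trans ?_ (Eq.trans key ?_)
      · rfl
      · exact neg_eq_zero.mpr (Finset.sum_eq_zero (fun p _ => hfilter p))


end
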